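/- arXiv:1804.08283 — 2 statements merged into one kernel-verified Lean document; each statement's English description precedes it below -/
import Mathlib

section
/- If u : ℝ → ℝ satisfies u'' + u = 0, then the function I₀²(φ) = (u'(φ)² − u(φ)²)·sin(2φ)/2 − u(φ)·u'(φ)·cos(2φ) is constant. -/
theorem stmt_1 (u : ℝ → ℝ) (hu : Differentiable ℝ u)
    (hu' : Differentiable ℝ (deriv u))
    (hode : ∀ φ : ℝ, deriv (deriv u) φ + u φ = 0) :
    ∀ φ₁ φ₂ : ℝ,
      (deriv u φ₁ ^ 2 - u φ₁ ^ 2) * Real.sin (2 * φ₁) / 2 - u φ₁ * deriv u φ₁ * Real.cos (2 * φ₁)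
      = (deriv u φ₂ ^ 2 - u φ₂ ^ 2) * Real.sin (2 * φ₂) / 2 - u φ₂ * deriv u φ₂ * Real.cos (2 * φ₂) := by
  set f : ℝ → ℝ := fun φ =>
    (deriv u φ ^ 2 - u φ ^ 2) * Real.sin (2 * φ) / 2 - u φ * deriv u φ * Real.cos (2 * φ) with hf
  have key : ∀ φ : ℝ, HasDerivAt f 0 φ := by
    intro φ
    have hU : HasDerivAt u (deriv u φ) φ := (hu φ).hasDerivAt
    have hU' : HasDerivAt (deriv u) (- u φ) φ := by
      have := (hu' φ).hasDerivAt
      simpa [show deriv (deriv u) φ = - u φ by linarith [hode φ]] using this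
    have h2 : HasDerivAt (fun φ : ℝ => 2 * φ) 2 φ := by
      simpa using (hasDerivAt_id φ).const_mul (2 : ℝ)
    have hs : HasDerivAt (fun φ : ℝ => Real.sin (2 * φ)) (Real.cos (2 * φ) * 2) φ := h2.sin
    have hc : HasDerivAt (fun φ : ℝ => Real.cos (2 * φ)) (-Real.sin (2 * φ) * 2) φ := h2.cos
    have H := (((((hU'.pow 2).sub (hU.pow 2)).mul hs).div_const 2).sub
      (((hU.mul hU').mul hc)))
    refine H.congr_deriv ?_
    simp only [Pi.pow_apply, Pi.sub_apply, Pi.mul_apply]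
    norm_num
    ring
  intro φ₁ φ₂
  have : f φ₁ = f φ₂ := by
    have := is_const_of_deriv_eq_zero (f := f)
      (fun φ => (key φ).differentiableAt) (fun φ => (key φ).deriv) φ₁ φ₂
    exact this
  simpa [hf] using this
end

section
/- If u : ℝ → ℝ satisfies u'' + u = 0, then the function I₀³(φ) = (u'(φ)² − u(φ)²)·cos(2φ)/2 + u(φ)·u'(φ)·sin(2φ) is constant. -/
theorem stmt_2 (u : ℝ → ℝ) (hu : Differentiable ℝ u)
    (hu' : Differentiable ℝ (deriv u))
    (hode : ∀ φ : ℝ, deriv (deriv u) φ + u φ = 0) :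
    ∀ φ₁ φ₂ : ℝ,
      (deriv u φ₁ ^ 2 - u φ₁ ^ 2) * Real.cos (2 * φ₁) / 2 + u φ₁ * deriv u φ₁ * Real.sin (2 * φ₁)
      = (deriv u φ₂ ^ 2 - u φ₂ ^ 2) * Real.cos (2 * φ₂) / 2 + u φ₂ * deriv u φ₂ * Real.sin (2 * φ₂) := by
  set f : ℝ → ℝ := fun φ =>
    (deriv u φ ^ 2 - u φ ^ 2) * Real.cos (2 * φ) / 2 + u φ * deriv u φ * Real.sin (2 * φ)
    with hf
  have hd : ∀ φ : ℝ, HasDerivAt f 0 φ := by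
    intro φ
    have h1 : HasDerivAt u (deriv u φ) φ := (hu φ).hasDerivAt
    have h2 : HasDerivAt (deriv u) (-(u φ)) φ := by
      have := (hu' φ).hasDerivAt
      have h : deriv (deriv u) φ = -(u φ) := by linarith [hode φ]
      rwa [h] at this
    have hlin : HasDerivAt (fun x : ℝ => 2 * x) 2 φ := by
      simpa using (hasDerivAt_id φ).const_mul 2
    have hcos : HasDerivAt (fun x : ℝ => Real.cos (2 * x)) (-Real.sin (2 * φ) * 2) φ :=
      (Real.hasDerivAt_cos (2 * φ)).comp φ hlin
    have hsin : HasDerivAt (fun x : ℝ => Real.sin (2 * x)) (Real.cos (2 * φ) * 2) φ :=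
      (Real.hasDerivAt_sin (2 * φ)).comp φ hlin
    have hA : HasDerivAt (fun x => (deriv u x ^ 2 - u x ^ 2))
        (2 * deriv u φ * (-(u φ)) - 2 * u φ * deriv u φ) φ := by
      have := ((h2.pow 2).sub (h1.pow 2))
      change HasDerivAt (fun x => deriv u x ^ 2 - u x ^ 2) _ φ at this
      simpa [mul_comm, mul_assoc, mul_left_comm] using this
    have hB : HasDerivAt (fun x => u x * deriv u x)
        (deriv u φ * deriv u φ + u φ * (-(u φ))) φ := h1.mul h2
    have h : HasDerivAt f
        (((2 * deriv u φ * (-(u φ)) - 2 * u φ * deriv u φ) * Real.cos (2 * φ)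
          + (deriv u φ ^ 2 - u φ ^ 2) * (-Real.sin (2 * φ) * 2)) / 2
        + ((deriv u φ * deriv u φ + u φ * (-(u φ))) * Real.sin (2 * φ)
          + (u φ * deriv u φ) * (Real.cos (2 * φ) * 2))) φ :=
      ((hA.mul hcos).div_const 2).add (hB.mul hsin)
    convert h using 1
    ring
  intro φ₁ φ₂
  have : ∀ x y : ℝ, f x = f y := fun x y =>
    is_const_of_deriv_eq_zero (fun z => (hd z).differentiableAt)
      (fun z => (hd z).deriv) x y
  exact this φ₁ φ₂
end
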